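/- Let β ≥ 0, let B(β) be the 4×4 real matrix with rows (1,0,0,1), (0,1,−1,0), (0,−1,−2β−2,0), (1,0,0,β+1), and let J be the standard 4×4 symplectic matrix with block form rows (0, −I₂), (I₂, 0). Then the characteristic polynomial of J·B(β) is λ⁴ + (1−β)λ² − β(2β+3). Moreover, if β > 0, the set of complex roots of this polynomial is exactly {√α₁, −√α₁, i·θ(β), −i·θ(β)}, where α₁ = (β−1+√(9β²+10β+1))/2 > 0 and θ(β) = √((1−β+√(9β²+10β+1))/2) > 0. -/

import Mathlib

open Polynomial

/-- The characteristic polynomial of `J·B(β)` is `λ⁴ + (1−β)λ² − β(2β+3)`, and for `β > 0`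
its complex roots are exactly `±√α₁` and `±i·θ(β)`. -/
theorem euler_circular_charpoly_and_roots (β : ℝ) (hβ : 0 ≤ β) :
    (Matrix.charpoly
        ((!![(0 : ℝ), 0, -1, 0; 0, 0, 0, -1; 1, 0, 0, 0; 0, 1, 0, 0]) *
          (!![(1 : ℝ), 0, 0, 1; 0, 1, -1, 0; 0, -1, -2 * β - 2, 0; 1, 0, 0, β + 1]))
      = X ^ 4 + C (1 - β) * X ^ 2 - C (β * (2 * β + 3))) ∧
    (0 < β →
      0 < (β - 1 + Real.sqrt (9 * β ^ 2 + 10 * β + 1)) / 2 ∧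
      0 < Real.sqrt ((1 - β + Real.sqrt (9 * β ^ 2 + 10 * β + 1)) / 2) ∧
      {z : ℂ | z ^ 4 + (1 - (β : ℂ)) * z ^ 2 - (β : ℂ) * (2 * (β : ℂ) + 3) = 0} =
        {((Real.sqrt ((β - 1 + Real.sqrt (9 * β ^ 2 + 10 * β + 1)) / 2) : ℝ) : ℂ),
         -((Real.sqrt ((β - 1 + Real.sqrt (9 * β ^ 2 + 10 * β + 1)) / 2) : ℝ) : ℂ),
         Complex.I * ((Real.sqrt ((1 - β + Real.sqrt (9 * β ^ 2 + 10 * β + 1)) / 2) : ℝ) : ℂ),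
         -(Complex.I * ((Real.sqrt ((1 - β + Real.sqrt (9 * β ^ 2 + 10 * β + 1)) / 2) : ℝ) : ℂ))}) := by
  constructor
  · rw [Matrix.charpoly, show ((!![(0 : ℝ), 0, -1, 0; 0, 0, 0, -1; 1, 0, 0, 0; 0, 1, 0, 0]) *
            (!![(1 : ℝ), 0, 0, 1; 0, 1, -1, 0; 0, -1, -2 * β - 2, 0; 1, 0, 0, β + 1]))
        = !![(0:ℝ), 1, 2*β+2, 0; -1, 0, 0, -(β+1); 1, 0, 0, 1; 0, 1, -1, 0] from by
          ext i j; fin_cases i <;> fin_cases j <;>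
            simp [Matrix.mul_apply, Fin.sum_univ_four] <;> ring,
       show (!![(0:ℝ), 1, 2*β+2, 0; -1, 0, 0, -(β+1); 1, 0, 0, 1; 0, 1, -1, 0]).charmatrix
        = !![X, -C 1, -C (2*β+2), 0; C 1, X, 0, C (β+1); -C 1, 0, X, -C 1; 0, -C 1, C 1, X] from by
          ext i j; fin_cases i <;> fin_cases j <;> simp [Matrix.charmatrix_apply]]
    simp [Matrix.det_succ_row_zero, Fin.sum_univ_succ, Matrix.det_fin_three,
      Fin.succAbove]
    simp only [map_ofNat]; ring
  · intro h
    set s := Real.sqrt (9 * β ^ 2 + 10 * β + 1) with hs_def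
    have hs0 : 0 ≤ s := Real.sqrt_nonneg _
    have hs2 : s ^ 2 = 9 * β ^ 2 + 10 * β + 1 := Real.sq_sqrt (by nlinarith)
    have hA : 0 < (β - 1 + s) / 2 := by nlinarith [sq_nonneg (s - (1 - β))]
    have hT : 0 < (1 - β + s) / 2 := by nlinarith [sq_nonneg (s - (β - 1))]
    set a := Real.sqrt ((β - 1 + s) / 2) with ha_def
    set t := Real.sqrt ((1 - β + s) / 2) with ht_def
    have ha2 : a ^ 2 = (β - 1 + s) / 2 := Real.sq_sqrt hA.le
    have ht2 : t ^ 2 = (1 - β + s) / 2 := Real.sq_sqrt hT.le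
    refine ⟨hA, Real.sqrt_pos.2 hT, ?_⟩
    have hA' : ((a : ℂ)) ^ 2 = ((β : ℂ) - 1 + (s : ℂ)) / 2 := by
      exact_mod_cast congrArg (Complex.ofReal ·) ha2
    have hT' : ((t : ℂ)) ^ 2 = (1 - (β : ℂ) + (s : ℂ)) / 2 := by
      exact_mod_cast congrArg (Complex.ofReal ·) ht2
    have hs' : ((s : ℂ)) ^ 2 = 9 * (β : ℂ) ^ 2 + 10 * (β : ℂ) + 1 := by
      exact_mod_cast congrArg (Complex.ofReal ·) hs2
    ext z
    have key : z ^ 4 + (1 - (β : ℂ)) * z ^ 2 - (β : ℂ) * (2 * (β : ℂ) + 3)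
        = (z - a) * (z + a) * (z - Complex.I * t) * (z + Complex.I * t) := by
      have e1 : (z - (a:ℂ)) * (z + a) * (z - Complex.I * t) * (z + Complex.I * t)
          = (z ^ 2 - (a : ℂ) ^ 2) * (z ^ 2 + (t : ℂ) ^ 2) := by
        linear_combination (-(z ^ 2 - (a:ℂ) ^ 2) * (t:ℂ) ^ 2) * Complex.I_sq
      rw [e1, hA', hT']
      linear_combination (1/4 : ℂ) * hs'
    rw [Set.mem_setOf_eq, key]
    simp only [Set.mem_insert_iff, Set.mem_singleton_iff]
    rw [mul_eq_zero, mul_eq_zero, mul_eq_zero, sub_eq_zero, sub_eq_zero,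
      add_eq_zero_iff_eq_neg, add_eq_zero_iff_eq_neg]
    tauto
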